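/- arXiv:1808.01464 — 2 statements merged into one kernel-verified Lean document; each statement's English description precedes it below -/
import Mathlib

section
/- Let D be a set. The face maps d_i : Y_n → Y_{n-1} (0 ≤ i ≤ n) on planar binary trees, which delete the i-th leaf, satisfy the pre-operadic identities: (i) R_0(k; 1,…,1) = id on Y_k; (ii) R_0(k; n_1,…,n_k) ∘ R_0(n_1+⋯+n_k; m_1,…,m_{n_1+⋯+n_k}) = R_0(k; m_1+⋯+m_{n_1}, m_{n_1+1}+⋯+m_{n_1+n_2}, …, m_{n_1+⋯+n_{k-1}+1}+⋯+m_{n_1+⋯+n_k}); (iii) R_i(k; n_1,…,n_k) ∘ R_0(n_1+⋯+n_k; m_1,…,m_{n_1+⋯+n_k}) = R_0(n_i; m_{n_1+⋯+n_{i-1}+1},…,m_{n_1+⋯+n_i}) ∘ R_i(k; m_1+⋯+m_{n_1}, …, m_{n_1+⋯+n_{k-1}+1}+⋯+m_{n_1+⋯+n_k}); (iv) R_{n_1+⋯+n_{i-1}+j}(n_1+⋯+n_k; m_1,…,m_{n_1+⋯+n_k}) = R_j(n_i; m_{n_1+⋯+n_{i-1}+1},…,m_{n_1+⋯+n_i})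 ∘ R_i(k; m_1+⋯+m_{n_1}, …, m_{n_1+⋯+n_{k-1}+1}+⋯+m_{n_1+⋯+n_k}), for all k, n_1,…,n_k, m_1,…,m_{n_1+⋯+n_k} ≥ 1 and 1 ≤ i ≤ k, 1 ≤ j ≤ n_i. -/
/-! Planar binary trees: `PBTree.vert` counts internal (trivalent) vertices, so
`Y_n = {y : PBTree // y.vert = n}` with the `n+1` leaves labelled `0,…,n` from left to
right.  `PBTree.del y i` is the face map `d_i`, deleting the `i`-th leaf.
`Rmap0 k n` and `Rmapi k n i` are the composites `R_0(k; n_1,…,n_k)` and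
`R_i(k; n_1,…,n_k)` of face maps (the sequence `n_1,…,n_k` is encoded as the function
`n : ℕ → ℕ`, `psum n i = n_1 + ⋯ + n_i`). -/

inductive PBTree : Type
  | leaf : PBTree
  | node : PBTree → PBTree → PBTree
  deriving DecidableEq

namespace PBTree

def vert : PBTree → ℕ
  | leaf => 0
  | node l r => vert l + vert r + 1

def del : PBTree → ℕ → PBTree
  | leaf, _ => leaf
  | node l r, i =>
    if i ≤ l.vert then
      match l with
      | leaf => r
      | node a b => node ((node a b).del i) r
    else
      match r with
      | leaf => l
      | node a b => node l ((node a b).del (i - l.vert - 1))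

def faceList : List ℕ → PBTree → PBTree
  | [], y => y
  | i :: rest, y => (faceList rest y).del i

def leafLeft : PBTree → ℕ → Bool
  | leaf, _ => false
  | node l r, i =>
    if i ≤ l.vert then
      match l with
      | leaf => true
      | node a b => (node a b).leafLeft i
    else
      match r with
      | leaf => false
      | node a b => (node a b).leafLeft (i - l.vert - 1)

end PBTree

def psum (n : ℕ → ℕ) (i : ℕ) : ℕ := ∑ j ∈ Finset.range i, n (j + 1)

def R0list (k : ℕ) (n : ℕ → ℕ) : List ℕ :=
  (List.range (psum n k + 1)).filter fun j =>
    decide (∀ i < k + 1, psum n i ≠ j)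

def Rilist (k : ℕ) (n : ℕ → ℕ) (i : ℕ) : List ℕ :=
  (List.range (psum n k + 1)).filter fun j =>
    decide (j < psum n (i - 1) ∨ psum n i < j)

def Rmap0 (k : ℕ) (n : ℕ → ℕ) (y : PBTree) : PBTree := PBTree.faceList (R0list k n) y

def Rmapi (k : ℕ) (n : ℕ → ℕ) (i : ℕ) (y : PBTree) : PBTree :=
  PBTree.faceList (Rilist k n i) y

def blockSum (n m : ℕ → ℕ) (i : ℕ) : ℕ :=
  ∑ j ∈ Finset.range (n i), m (psum n (i - 1) + j + 1)

namespace PreOp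

open PBTree

/-- Number of `j < t` with `p j = true`. -/
def cnt (p : ℕ → Bool) (t : ℕ) : ℕ := ∑ j ∈ Finset.range t, if p j then 1 else 0

/-- Number of `j` in `[off, off+len)` with `p j = true`. -/
def cntI (p : ℕ → Bool) (off len : ℕ) : ℕ :=
  ∑ j ∈ Finset.range len, if p (off + j) then 1 else 0

lemma cntI_zero_off (p : ℕ → Bool) (t : ℕ) : cntI p 0 t = cnt p t := by
  unfold cntI cnt; exact Finset.sum_congr rfl (by simp)

lemma cnt_succ (p : ℕ → Bool) (t : ℕ) :
    cnt p (t + 1) = cnt p t + (if p t then 1 else 0) := Finset.sum_range_succ _ _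

lemma cnt_le (p : ℕ → Bool) (t : ℕ) : cnt p t ≤ t := by
  unfold cnt
  calc ∑ j ∈ Finset.range t, (if p j then 1 else 0) ≤ ∑ _j ∈ Finset.range t, 1 :=
        Finset.sum_le_sum (fun j _ => by split <;> omega)
    _ = t := by simp

lemma cnt_mono (p : ℕ → Bool) {a b : ℕ} (h : a ≤ b) : cnt p a ≤ cnt p b :=
  Finset.sum_le_sum_of_subset (Finset.range_subset_range.2 h)

lemma cntI_add (p : ℕ → Bool) (off a b : ℕ) :
    cntI p off (a + b) = cntI p off a + cntI p (off + a) b := by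
  unfold cntI
  rw [Finset.sum_range_add]
  congr 1
  exact Finset.sum_congr rfl (fun j _ => by rw [add_assoc])

lemma cnt_as_cntI (p : ℕ → Bool) (a b : ℕ) : cnt p (a + b) = cnt p a + cntI p a b := by
  rw [← cntI_zero_off, ← cntI_zero_off]
  have := cntI_add p 0 a b
  simpa using this

lemma cntI_le_cntI (p q : ℕ → Bool) (off len : ℕ) (h : ∀ j, p j = true → q j = true) :
    cntI p off len ≤ cntI q off len := by
  unfold cntI
  refine Finset.sum_le_sum (fun j _ => ?_)
  by_cases hp : p (off + j) = true
  · rw [hp, h _ hp]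
  · simp [Bool.not_eq_true] at hp; simp [hp]

namespace PBTreeAux

/-- Prune a tree, keeping exactly the leaves whose (global) index satisfies `p`;
`off` is the index of the leftmost leaf. Returns `none` if no leaf is kept. -/
def prune : PBTree → ℕ → (ℕ → Bool) → Option PBTree
  | .leaf, off, p => if p off then some .leaf else none
  | .node l r, off, p =>
    match prune l off p, prune r (off + l.vert + 1) p with
    | some l', some r' => some (.node l' r')
    | some l', none => some l'
    | none, some r' => some r'
    | none, none => none

lemma prune_node (l r : PBTree) (off : ℕ) (p : ℕ → Bool) :
    prune (.node l r) off p =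
      match prune l off p, prune r (off + l.vert + 1) p with
      | some l', some r' => some (.node l' r')
      | some l', none => some l'
      | none, some r' => some r'
      | none, none => none := rfl

def psize : Option PBTree → ℕ
  | none => 0
  | some y => y.vert + 1

lemma psize_prune (y : PBTree) (off : ℕ) (p : ℕ → Bool) :
    psize (prune y off p) = cntI p off (y.vert + 1) := by
  induction y generalizing off with
  | leaf =>
      have h1 : cntI p off (PBTree.vert .leaf + 1) = if p off then 1 else 0 := by
        simp only [cntI, vert, Finset.sum_range_one, Nat.zero_add, Nat.add_zero]
      rw [h1]; by_cases h : p off <;> simp [prune, h, psize, vert]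
  | node l r ihl ihr =>
      simp only [prune, vert]
      rw [show l.vert + r.vert + 1 + 1 = (l.vert + 1) + (r.vert + 1) from by ring,
        cntI_add p off (l.vert + 1) (r.vert + 1)]
      rw [← ihl off]
      rw [show off + (l.vert + 1) = off + l.vert + 1 from (add_assoc off l.vert 1).symm,
        ← ihr (off + l.vert + 1)]
      rcases hL : prune l off p with _ | l' <;> rcases hR : prune r (off + l.vert + 1) p with _ | r' <;>
        simp [psize, vert] <;> omega

lemma prune_eq_none_of_psize (y : PBTree) (off : ℕ) (p : ℕ → Bool)
    (h : cntI p off (y.vert + 1) = 0) : prune y off p = none := by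
  have := psize_prune y off p
  rw [h] at this
  rcases hP : prune y off p with _ | y'
  · rfl
  · rw [hP] at this; simp [psize] at this

lemma prune_congr (y : PBTree) (off : ℕ) (p q : ℕ → Bool)
    (h : ∀ j, j < y.vert + 1 → p (off + j) = q (off + j)) :
    prune y off p = prune y off q := by
  induction y generalizing off with
  | leaf =>
      have := h 0 (by simp)
      simp only [prune]
      rw [show off + 0 = off by omega] at this
      rw [this]
  | node l r ihl ihr =>
      simp only [prune]
      rw [ihl off (fun j hj => h j (by simp [vert]; omega)),
        ihr (off + l.vert + 1) (fun j hj => by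
          have := h (l.vert + 1 + j) (by simp [vert]; omega)
          rw [show off + (l.vert + 1 + j) = off + l.vert + 1 + j by omega] at this
          exact this)]

lemma prune_all (y : PBTree) (off : ℕ) (p : ℕ → Bool)
    (h : ∀ j, j < y.vert + 1 → p (off + j) = true) :
    prune y off p = some y := by
  induction y generalizing off with
  | leaf =>
      have := h 0 (by simp)
      rw [show off + 0 = off by omega] at this
      simp [prune, this]
  | node l r ihl ihr =>
      simp only [prune]
      rw [ihl off (fun j hj => h j (by simp [vert]; omega)),
        ihr (off + l.vert + 1) (fun j hj => by
          have := h (l.vert + 1 + j) (by simp [vert]; omega)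
          rw [show off + (l.vert + 1 + j) = off + l.vert + 1 + j by omega] at this
          exact this)]

lemma prune_prune (y : PBTree) (off : ℕ) (p q : ℕ → Bool) :
    (prune y off p).bind (fun y' => prune y' (cnt p off) q)
      = prune y off (fun j => p j && q (cnt p j)) := by
  induction y generalizing off with
  | leaf =>
      by_cases h : p off
      · by_cases h2 : q (cnt p off) <;> simp [prune, h, h2]
      · simp [prune, h]
  | node l r ihl ihr =>
      have hsz : cnt p (off + l.vert + 1) = cnt p off + psize (prune l off p) := by
        rw [psize_prune, show off + l.vert + 1 = off + (l.vert + 1) from by ring,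
          cnt_as_cntI]
      simp only [prune]
      rcases hL : prune l off p with _ | l' <;>
        rcases hR : prune r (off + l.vert + 1) p with _ | r'
      · have el : prune l off (fun j => p j && q (cnt p j)) = none := by
          rw [← ihl off, hL]; rfl
        have er : prune r (off + l.vert + 1) (fun j => p j && q (cnt p j)) = none := by
          rw [← ihr (off + l.vert + 1), hR]; rfl
        rw [el, er]; rfl
      · have el : prune l off (fun j => p j && q (cnt p j)) = none := by
          rw [← ihl off, hL]; rfl
        have er : prune r (off + l.vert + 1) (fun j => p j && q (cnt p j))
            = prune r' (cnt p off) q := by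
          rw [← ihr (off + l.vert + 1), hR, hsz, hL]; rfl
        rw [el, er]
        show prune r' (cnt p off) q = _
        rcases hx : prune r' (cnt p off) q with _ | z <;> rfl
      · have el : prune l off (fun j => p j && q (cnt p j)) = prune l' (cnt p off) q := by
          rw [← ihl off, hL]; rfl
        have er : prune r (off + l.vert + 1) (fun j => p j && q (cnt p j)) = none := by
          rw [← ihr (off + l.vert + 1), hR]; rfl
        rw [el, er]
        show prune l' (cnt p off) q = _
        rcases hx : prune l' (cnt p off) q with _ | z <;> rfl
      · have el : prune l off (fun j => p j && q (cnt p j)) = prune l' (cnt p off) q := by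
          rw [← ihl off, hL]; rfl
        have er : prune r (off + l.vert + 1) (fun j => p j && q (cnt p j))
            = prune r' (cnt p off + (l'.vert + 1)) q := by
          rw [← ihr (off + l.vert + 1), hR, hsz, hL]; rfl
        rw [el, er]
        show prune (PBTree.node l' r') (cnt p off) q = _
        simp only [prune]
        rw [show cnt p off + l'.vert + 1 = cnt p off + (l'.vert + 1) from by ring]

lemma del_left (a b r : PBTree) (i : ℕ) (h : i ≤ (PBTree.node a b).vert) :
    (PBTree.node (.node a b) r).del i = .node ((PBTree.node a b).del i) r := by
  rw [PBTree.del.eq_def]; simp [h]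

lemma del_left_leaf (r : PBTree) : (PBTree.node .leaf r).del 0 = r := by
  rw [PBTree.del.eq_def]; simp [PBTree.vert]

lemma del_right (l a b : PBTree) (i : ℕ) (h : ¬ i ≤ l.vert) :
    (PBTree.node l (.node a b)).del i = .node l ((PBTree.node a b).del (i - l.vert - 1)) := by
  rw [PBTree.del.eq_def]; simp [h]

lemma del_right_leaf (l : PBTree) (i : ℕ) (h : ¬ i ≤ l.vert) :
    (PBTree.node l .leaf).del i = l := by
  rw [PBTree.del.eq_def]; simp [h]

lemma prune_del (y : PBTree) (off i : ℕ) (hy : y ≠ .leaf) (hi : i ≤ y.vert) :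
    prune y off (fun j => decide (j ≠ off + i)) = some (y.del i) := by
  induction y generalizing off i with
  | leaf => exact absurd rfl hy
  | node l r ihl ihr =>
      by_cases hil : i ≤ l.vert
      · have hr : prune r (off + l.vert + 1) (fun j => decide (j ≠ off + i)) = some r :=
          prune_all _ _ _ (fun j hj => by simp; omega)
        match l with
        | .leaf =>
            have hi0 : i = 0 := by simpa [vert] using hil
            subst hi0
            have hp : prune PBTree.leaf off (fun j => decide (j ≠ off + 0)) = none := by
              simp [prune]
            rw [prune_node, hp, hr, del_left_leaf]
        | .node a b =>
            have hl := ihl off i (by simp) hil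
            rw [prune_node, hl, hr, del_left a b r i hil]
      · have hl : prune l off (fun j => decide (j ≠ off + i)) = some l :=
          prune_all _ _ _ (fun j hj => by simp; omega)
        match r with
        | .leaf =>
            have hieq : i = l.vert + 1 := by simp [vert] at hi; omega
            have hp : prune PBTree.leaf (off + l.vert + 1)
                (fun j => decide (j ≠ off + i)) = none := by
              simp [prune, hieq] <;> omega
            rw [prune_node, hl, hp, del_right_leaf l i hil]
        | .node a b =>
            have hir := ihr (off + l.vert + 1) (i - l.vert - 1) (by simp)
              (by simp [vert] at hi ⊢; omega)
            rw [show off + i = (off + l.vert + 1) + (i - l.vert - 1) from by omega] at hl ⊢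
            rw [prune_node, hl, hir, del_right l a b i hil]

end PBTreeAux

open PBTreeAux

lemma cnt_eq_card (p : ℕ → Bool) (t : ℕ) :
    cnt p t = ((Finset.range t).filter (fun j => p j = true)).card := by
  unfold cnt
  rw [Finset.card_filter]

lemma cnt_not_mem (L : List ℕ) (t : ℕ) (hnd : L.Nodup) (hmem : ∀ x ∈ L, x < t) :
    cnt (fun j => decide (j ∉ L)) t + L.length = t := by
  have hsub : L.toFinset ⊆ Finset.range t := by
    intro x hx
    simp only [List.mem_toFinset] at hx
    exact Finset.mem_range.2 (hmem x hx)
  have hfil : (Finset.range t).filter (fun j => (decide (j ∉ L) : Bool) = true)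
      = Finset.range t \ L.toFinset := by
    ext x
    simp [List.mem_toFinset]
  rw [cnt_eq_card, hfil, Finset.card_sdiff_of_subset hsub, List.toFinset_card_of_nodup hnd,
    Finset.card_range]
  have := Finset.card_le_card hsub
  rw [List.toFinset_card_of_nodup hnd, Finset.card_range] at this
  omega

lemma cnt_ge (rest : List ℕ) (t : ℕ) (h : ∀ x ∈ rest, t ≤ x) :
    cnt (fun j => decide (j ∉ rest)) t = t := by
  rw [cnt_eq_card]
  rw [Finset.filter_true_of_mem, Finset.card_range]
  intro x hx
  simp only [Finset.mem_range] at hx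
  simp only [decide_eq_true_eq]
  intro hmem
  exact absurd (h x hmem) (by omega)

lemma combined_eq (i : ℕ) (rest : List ℕ) (hgt : ∀ x ∈ rest, i < x) (j : ℕ) :
    ((decide (j ∉ rest)) && decide (cnt (fun j' => decide (j' ∉ rest)) j ≠ i))
      = decide (j ∉ (i :: rest)) := by
  have hP : ∀ (b c : Bool), (b = true ↔ c = true) → b = c := fun b c h => by
    cases b <;> cases c <;> simp_all
  apply hP
  simp only [Bool.and_eq_true, decide_eq_true_eq, List.mem_cons]
  constructor
  · rintro ⟨h1, h2⟩ (rfl | hmem)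
    · exact h2 (cnt_ge rest j (fun x hx => le_of_lt (hgt x hx)))
    · exact h1 hmem
  · intro h
    push_neg at h
    obtain ⟨hji, hj⟩ := h
    refine ⟨hj, ?_⟩
    rcases lt_or_gt_of_ne hji with hlt | hgt2
    · have h1 : cnt (fun j' => decide (j' ∉ rest)) j ≤ j := cnt_le _ _
      omega
    · have h1 : cnt (fun j' => decide (j' ∉ rest)) (i + 1) = i + 1 :=
        cnt_ge rest (i + 1) (fun x hx => hgt x hx)
      have h2 : cnt (fun j' => decide (j' ∉ rest)) (i + 1)
          ≤ cnt (fun j' => decide (j' ∉ rest)) j := cnt_mono _ hgt2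
      omega

lemma vert_pos_ne_leaf {y : PBTree} (h : 1 ≤ y.vert) : y ≠ .leaf := by
  intro hy; subst hy; simp [PBTree.vert] at h

lemma faceList_prune : ∀ (L : List ℕ) (y : PBTree), L.Pairwise (· < ·) →
    (∀ x ∈ L, x ≤ y.vert) → L.length ≤ y.vert →
    prune y 0 (fun j => decide (j ∉ L)) = some (PBTree.faceList L y)
  | [], y, _, _, _ => by
      rw [PBTree.faceList]
      exact prune_all _ _ _ (fun j hj => by simp)
  | i :: rest, y, hsort, hbd, hlen => by
      have hgt : ∀ x ∈ rest, i < x := fun x hx => (List.pairwise_cons.1 hsort).1 x hx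
      have hrest := faceList_prune rest y (List.pairwise_cons.1 hsort).2
        (fun x hx => hbd x (List.mem_cons_of_mem i hx)) (by simp at hlen ⊢; omega)
      have hnd : rest.Nodup := (List.pairwise_cons.1 hsort).2.nodup
      set y₀ := PBTree.faceList rest y with hy₀
      -- vert of y₀
      have hv : y₀.vert + 1 + rest.length = y.vert + 1 := by
        have := psize_prune y 0 (fun j => decide (j ∉ rest))
        rw [hrest] at this
        rw [cntI_zero_off] at this
        have hc := cnt_not_mem rest (y.vert + 1) hnd
          (fun x hx => by have := hbd x (List.mem_cons_of_mem i hx); omega)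
        simp only [psize] at this
        omega
      -- rest.length ≤ y.vert - i
      have hlen2 : rest.length + i ≤ y.vert := by
        have hsub : rest.toFinset ⊆ Finset.Icc (i + 1) y.vert := by
          intro x hx
          simp only [List.mem_toFinset] at hx
          exact Finset.mem_Icc.2 ⟨hgt x hx, hbd x (List.mem_cons_of_mem i hx)⟩
        have := Finset.card_le_card hsub
        rw [List.toFinset_card_of_nodup hnd, Nat.card_Icc] at this
        have hi : i ≤ y.vert := hbd i (List.mem_cons_self)
        omega
      have hi0 : i ≤ y₀.vert := by simp at hlen; omega
      have hne : y₀ ≠ .leaf := vert_pos_ne_leaf (by simp at hlen; omega)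
      rw [PBTree.faceList]
      have hdel := prune_del y₀ 0 i hne hi0
      rw [show (fun j => decide (j ≠ 0 + i)) = (fun j => decide (j ≠ i)) from by
        funext j; rw [Nat.zero_add]] at hdel
      have hcomp := prune_prune y 0 (fun j => decide (j ∉ rest)) (fun t => decide (t ≠ i))
      rw [hrest] at hcomp
      have hcnt0 : cnt (fun j => decide (j ∉ rest)) 0 = 0 := by simp [cnt]
      rw [hcnt0] at hcomp
      simp only [Option.bind_some] at hcomp
      rw [hdel] at hcomp
      rw [← hy₀]
      rw [prune_congr y 0 (fun j => decide (j ∉ i :: rest))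
        (fun j => decide (j ∉ rest) && decide (cnt (fun j' => decide (j' ∉ rest)) j ≠ i))
        (fun j hj => by rw [Nat.zero_add]; exact (combined_eq i rest hgt j).symm)]
      exact hcomp.symm
/-! ### psum arithmetic -/

lemma psum_zero (m : ℕ → ℕ) : psum m 0 = 0 := rfl

lemma psum_succ (m : ℕ → ℕ) (a : ℕ) : psum m (a + 1) = psum m a + m (a + 1) :=
  Finset.sum_range_succ _ _

lemma psum_add (m : ℕ → ℕ) (a b : ℕ) :
    psum m (a + b) = psum m a + ∑ j ∈ Finset.range b, m (a + j + 1) := by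
  unfold psum
  rw [Finset.sum_range_add]

lemma psum_le (m : ℕ → ℕ) {a b : ℕ} (h : a ≤ b) : psum m a ≤ psum m b :=
  Finset.sum_le_sum_of_subset (Finset.range_subset_range.2 h)

lemma psum_lt {m : ℕ → ℕ} {N a b : ℕ} (hm : ∀ j, 1 ≤ j → j ≤ N → 1 ≤ m j)
    (hab : a < b) (hbN : b ≤ N) : psum m a < psum m b := by
  have h1 : psum m (a + 1) ≤ psum m b := psum_le m hab
  rw [psum_succ] at h1
  have h2 : 1 ≤ m (a + 1) := hm (a + 1) (by omega) (by omega)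
  omega

lemma psum_inj {m : ℕ → ℕ} {N a b : ℕ} (hm : ∀ j, 1 ≤ j → j ≤ N → 1 ≤ m j)
    (ha : a ≤ N) (hb : b ≤ N) (h : psum m a = psum m b) : a = b := by
  rcases lt_trichotomy a b with hlt | heq | hgt
  · exact absurd h (Nat.ne_of_lt (psum_lt hm hlt hb))
  · exact heq
  · exact absurd h.symm (Nat.ne_of_lt (psum_lt hm hgt ha))

lemma psum_shift (m : ℕ → ℕ) (c s : ℕ) :
    psum m (c + s) = psum m c + psum (fun l => m (c + l)) s := by
  rw [psum_add]
  rfl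

lemma psum_pred_add {n : ℕ → ℕ} {i : ℕ} (hi : 1 ≤ i) :
    psum n i = psum n (i - 1) + n i := by
  have h : i - 1 + 1 = i := by omega
  calc psum n i = psum n (i - 1 + 1) := by rw [h]
    _ = psum n (i - 1) + n (i - 1 + 1) := psum_succ _ _
    _ = psum n (i - 1) + n i := by rw [h]

lemma blockSum_eq_psum (n m : ℕ → ℕ) (i : ℕ) :
    blockSum n m i = psum (fun l => m (psum n (i - 1) + l)) (n i) := by
  rfl

lemma psum_blockSum (n m : ℕ → ℕ) (s : ℕ) :
    psum (blockSum n m) s = psum m (psum n s) := by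
  induction s with
  | zero => simp [psum_zero]
  | succ s ih =>
      rw [psum_succ, ih, psum_succ n s, psum_add]
      rfl

/-! ### counting lemmas -/

lemma cnt_of_psum_keep (p : ℕ → Bool) (m : ℕ → ℕ) (N t : ℕ)
    (hm : ∀ j, 1 ≤ j → j ≤ N → 1 ≤ m j) (ht : t ≤ N)
    (hp : ∀ j, j < psum m t → (p j = true ↔ ∃ s, s ≤ N ∧ psum m s = j)) :
    cnt p (psum m t) = t := by
  rw [cnt_eq_card]
  have hfil : (Finset.range (psum m t)).filter (fun j => p j = true)
      = (Finset.range t).image (psum m) := by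
    ext x
    simp only [Finset.mem_filter, Finset.mem_range, Finset.mem_image]
    constructor
    · rintro ⟨hx, hpx⟩
      obtain ⟨s, hsN, hs⟩ := (hp x hx).1 hpx
      refine ⟨s, ?_, hs⟩
      by_contra hst
      push_neg at hst
      have := psum_le m hst
      omega
    · rintro ⟨s, hst, rfl⟩
      have hlt : psum m s < psum m t := psum_lt hm hst ht
      exact ⟨hlt, (hp _ hlt).2 ⟨s, le_trans (le_of_lt hst) ht, rfl⟩⟩
  rw [hfil, Finset.card_image_of_injOn, Finset.card_range]
  intro a ha b hb hab
  simp only [Finset.coe_range, Set.mem_Iio] at ha hb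
  exact psum_inj hm (by omega) (by omega) hab

lemma cnt_of_interval_keep (p : ℕ → Bool) (a b t : ℕ)
    (hp : ∀ j, j < t → (p j = true ↔ a ≤ j ∧ j ≤ b)) :
    cnt p t = min t (b + 1) - min t a := by
  rw [cnt_eq_card]
  have hfil : (Finset.range t).filter (fun j => p j = true)
      = Finset.Ico (min t a) (min t (b + 1)) := by
    ext x
    simp only [Finset.mem_filter, Finset.mem_range, Finset.mem_Ico]
    constructor
    · rintro ⟨hx, hpx⟩
      have := (hp x hx).1 hpx
      omega
    · intro hx
      have hxt : x < t := by omega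
      exact ⟨hxt, (hp x hxt).2 (by omega)⟩
  rw [hfil, Nat.card_Ico]

/-! ### list membership -/

lemma not_mem_R0list {N : ℕ} {m : ℕ → ℕ} {j : ℕ} (hj : j ≤ psum m N) :
    (j ∉ R0list N m) ↔ ∃ t, t ≤ N ∧ psum m t = j := by
  simp only [R0list, List.mem_filter, List.mem_range, decide_eq_true_eq, not_and, not_forall]
  constructor
  · intro h
    obtain ⟨t, ht, hpt⟩ := h (by omega)
    exact ⟨t, by omega, by simpa using hpt⟩
  · rintro ⟨t, htN, rfl⟩ _
    exact ⟨t, by omega, by simp⟩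

lemma not_mem_Rilist {k : ℕ} {n : ℕ → ℕ} {i j : ℕ} (hj : j ≤ psum n k) :
    (j ∉ Rilist k n i) ↔ psum n (i - 1) ≤ j ∧ j ≤ psum n i := by
  simp only [Rilist, List.mem_filter, List.mem_range, decide_eq_true_eq, not_and, not_or]
  constructor
  · intro h
    have := h (by omega)
    omega
  · intro h _
    omega

lemma sorted_filter_range (t : ℕ) (q : ℕ → Bool) :
    ((List.range t).filter q).Pairwise (· < ·) :=
  List.Pairwise.sublist List.filter_sublist List.pairwise_lt_range

lemma length_le_of_avoid (L : List ℕ) (t x : ℕ) (hnd : L.Nodup)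
    (hsub : ∀ z ∈ L, z < t + 1) (hx : x ≤ t) (hxL : x ∉ L) : L.length ≤ t := by
  have hsub2 : L.toFinset ⊆ (Finset.range (t + 1)).erase x := by
    intro z hz
    simp only [List.mem_toFinset] at hz
    refine Finset.mem_erase.2 ⟨?_, Finset.mem_range.2 (hsub z hz)⟩
    rintro rfl
    exact hxL hz
  have hle := Finset.card_le_card hsub2
  rw [List.toFinset_card_of_nodup hnd,
    Finset.card_erase_of_mem (Finset.mem_range.2 (by omega)), Finset.card_range] at hle
  omega

/-! ### packaging -/

lemma Rmap0_prune (N : ℕ) (m : ℕ → ℕ) (hm : ∀ j, 1 ≤ j → j ≤ N → 1 ≤ m j)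
    (y : PBTree) (hy : y.vert = psum m N) :
    prune y 0 (fun j => decide (j ∉ R0list N m)) = some (Rmap0 N m y)
      ∧ (Rmap0 N m y).vert = N := by
  have hsort : (R0list N m).Pairwise (· < ·) := sorted_filter_range _ _
  have hnd : (R0list N m).Nodup := hsort.nodup
  have hmemr : ∀ x ∈ R0list N m, x < psum m N + 1 := by
    intro x hx
    simp only [R0list, List.mem_filter, List.mem_range] at hx
    exact hx.1
  have h0 : (0:ℕ) ∉ R0list N m :=
    (not_mem_R0list (by omega)).2 ⟨0, Nat.zero_le _, psum_zero m⟩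
  have hlen : (R0list N m).length ≤ y.vert := by
    rw [hy]
    exact length_le_of_avoid _ _ 0 hnd hmemr (Nat.zero_le _) h0
  have h1 := faceList_prune (R0list N m) y hsort
    (fun x hx => by have := hmemr x hx; omega) hlen
  have hcnt : cnt (fun j => decide (j ∉ R0list N m)) (psum m N) = N :=
    cnt_of_psum_keep _ m N N hm le_rfl (fun j hj => by
      rw [decide_eq_true_eq]
      exact not_mem_R0list (by omega))
  have hlast : (decide ((psum m N) ∉ R0list N m)) = true := by
    rw [decide_eq_true_eq]
    exact (not_mem_R0list le_rfl).2 ⟨N, le_rfl, rfl⟩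
  have hsz := psize_prune y 0 (fun j => decide (j ∉ R0list N m))
  rw [h1, cntI_zero_off, hy, cnt_succ, hcnt, hlast] at hsz
  simp only [psize, if_true] at hsz
  refine ⟨h1, ?_⟩
  have h2 : (Rmap0 N m y).vert + 1 = N + 1 := hsz
  omega

lemma Rmapi_prune (k : ℕ) (n : ℕ → ℕ) (i : ℕ) (hi1 : 1 ≤ i) (hik : i ≤ k)
    (y : PBTree) (hy : y.vert = psum n k) :
    prune y 0 (fun j => decide (j ∉ Rilist k n i)) = some (Rmapi k n i y)
      ∧ (Rmapi k n i y).vert = n i := by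
  have hsort : (Rilist k n i).Pairwise (· < ·) := sorted_filter_range _ _
  have hnd : (Rilist k n i).Nodup := hsort.nodup
  have hmemr : ∀ x ∈ Rilist k n i, x < psum n k + 1 := by
    intro x hx
    simp only [Rilist, List.mem_filter, List.mem_range] at hx
    exact hx.1
  have hle1 : psum n (i - 1) ≤ psum n i := psum_le n (by omega)
  have hle2 : psum n i ≤ psum n k := psum_le n hik
  have h0 : psum n (i - 1) ∉ Rilist k n i :=
    (not_mem_Rilist (by omega)).2 ⟨le_rfl, hle1⟩
  have hlen : (Rilist k n i).length ≤ y.vert := by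
    rw [hy]
    exact length_le_of_avoid _ _ (psum n (i - 1)) hnd hmemr (by omega) h0
  have h1 := faceList_prune (Rilist k n i) y hsort
    (fun x hx => by have := hmemr x hx; omega) hlen
  have hcnt : cnt (fun j => decide (j ∉ Rilist k n i)) (psum n k + 1)
      = min (psum n k + 1) (psum n i + 1) - min (psum n k + 1) (psum n (i - 1)) :=
    cnt_of_interval_keep _ (psum n (i - 1)) (psum n i) _ (fun j hj => by
      rw [decide_eq_true_eq]
      exact not_mem_Rilist (by omega))
  have hsz := psize_prune y 0 (fun j => decide (j ∉ Rilist k n i))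
  rw [h1, cntI_zero_off, hy, hcnt] at hsz
  simp only [psize] at hsz
  have hpred : psum n i = psum n (i - 1) + n i := psum_pred_add hi1
  refine ⟨h1, ?_⟩
  have h2 : (Rmapi k n i y).vert + 1
      = min (psum n k + 1) (psum n i + 1) - min (psum n k + 1) (psum n (i - 1)) := hsz
  omega

/-! ### composition helpers -/

lemma bool_eq_iff {b c : Bool} (h : b = true ↔ c = true) : b = c := by
  cases b <;> cases c <;> simp_all

lemma comp_prune {y y₀ z : PBTree} {p q : ℕ → Bool}
    (h1 : prune y 0 p = some y₀) (h2 : prune y₀ 0 q = some z) :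
    prune y 0 (fun j => p j && q (cnt p j)) = some z := by
  have hpp := prune_prune y 0 p q
  rw [h1] at hpp
  have hc : cnt p 0 = 0 := by simp [cnt]
  rw [hc] at hpp
  simp only [Option.bind_some] at hpp
  rw [h2] at hpp
  exact hpp.symm

lemma prune_eq_of (y : PBTree) (p q : ℕ → Bool) {a b : PBTree}
    (h1 : prune y 0 p = some a) (h2 : prune y 0 q = some b)
    (h : ∀ j, j ≤ y.vert → p j = q j) : a = b := by
  have hc := prune_congr y 0 p q (fun j hj => by
    simpa using h j (by omega))
  rw [h1, h2] at hc
  exact Option.some.inj hc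

lemma blockSum_pos {k : ℕ} {n m : ℕ → ℕ} (hn : ∀ i, 1 ≤ i → i ≤ k → 1 ≤ n i)
    (hm : ∀ j, 1 ≤ j → j ≤ psum n k → 1 ≤ m j) :
    ∀ j, 1 ≤ j → j ≤ k → 1 ≤ blockSum n m j := by
  intro j hj1 hjk
  rw [blockSum_eq_psum]
  have h1n : 1 ≤ n j := hn j hj1 hjk
  have hpred : psum n j = psum n (j - 1) + n j := psum_pred_add hj1
  have hbound : psum n (j - 1) + 1 ≤ psum n k := by
    have := psum_le n hjk; omega
  have hm1 : 1 ≤ m (psum n (j - 1) + 1) := hm _ (by omega) hbound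
  have hle := psum_le (fun l => m (psum n (j - 1) + l)) h1n
  have h1 : psum (fun l => m (psum n (j - 1) + l)) 1 = m (psum n (j - 1) + 1) := by
    simp [psum]
  omega

lemma cnt_keep_R0 {N : ℕ} {m : ℕ → ℕ} (hm : ∀ j, 1 ≤ j → j ≤ N → 1 ≤ m j)
    {t : ℕ} (ht : t ≤ N) :
    cnt (fun j' => decide (j' ∉ R0list N m)) (psum m t) = t :=
  cnt_of_psum_keep _ m N t hm ht (fun j' hj' => by
    rw [decide_eq_true_eq]
    exact not_mem_R0list (by
      have := psum_le m ht
      omega))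

lemma cnt_keep_Ri {k : ℕ} {n : ℕ → ℕ} {i : ℕ} {j : ℕ} (hjk : j ≤ psum n k)
    (hA : psum n (i - 1) ≤ j) (hB : j ≤ psum n i) :
    cnt (fun j' => decide (j' ∉ Rilist k n i)) j = j - psum n (i - 1) := by
  have h := cnt_of_interval_keep (fun j' => decide (j' ∉ Rilist k n i))
    (psum n (i - 1)) (psum n i) j
    (fun j' hj' => by rw [decide_eq_true_eq]; exact not_mem_Rilist (by omega))
  omega

lemma psum_one (t : ℕ) : psum (fun _ => 1) t = t := by simp [psum]

end PreOp

open PreOp PreOp.PBTreeAux in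
theorem preoperadic_identities' :
    (∀ k : ℕ, 1 ≤ k → ∀ y : PBTree, y.vert = k → Rmap0 k (fun _ => 1) y = y) ∧
    (∀ (k : ℕ) (n m : ℕ → ℕ), 1 ≤ k →
      (∀ i, 1 ≤ i → i ≤ k → 1 ≤ n i) →
      (∀ j, 1 ≤ j → j ≤ psum n k → 1 ≤ m j) →
      ∀ y : PBTree, y.vert = psum m (psum n k) →
        Rmap0 k n (Rmap0 (psum n k) m y) = Rmap0 k (blockSum n m) y) ∧
    (∀ (k : ℕ) (n m : ℕ → ℕ) (i : ℕ), 1 ≤ k → 1 ≤ i → i ≤ k →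
      (∀ i', 1 ≤ i' → i' ≤ k → 1 ≤ n i') →
      (∀ j, 1 ≤ j → j ≤ psum n k → 1 ≤ m j) →
      ∀ y : PBTree, y.vert = psum m (psum n k) →
        Rmapi k n i (Rmap0 (psum n k) m y)
          = Rmap0 (n i) (fun j => m (psum n (i - 1) + j)) (Rmapi k (blockSum n m) i y)) ∧
    (∀ (k : ℕ) (n m : ℕ → ℕ) (i j : ℕ), 1 ≤ k → 1 ≤ i → i ≤ k → 1 ≤ j → j ≤ n i →
      (∀ i', 1 ≤ i' → i' ≤ k → 1 ≤ n i') →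
      (∀ j', 1 ≤ j' → j' ≤ psum n k → 1 ≤ m j') →
      ∀ y : PBTree, y.vert = psum m (psum n k) →
        Rmapi (psum n k) m (psum n (i - 1) + j) y
          = Rmapi (n i) (fun l => m (psum n (i - 1) + l)) j
              (Rmapi k (blockSum n m) i y)) := by
  refine ⟨?_, ?_, ?_, ?_⟩
  · -- (i)
    intro k hk y hy
    have hnil : R0list k (fun _ => 1) = [] := by
      unfold R0list
      rw [List.filter_eq_nil_iff]
      intro a ha
      simp only [List.mem_range, psum_one] at ha
      simp only [decide_eq_true_eq, not_forall]
      exact ⟨a, by simpa [psum_one] using ha, by simp [psum_one]⟩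
    unfold Rmap0
    rw [hnil]
    rfl
  · -- (ii)
    intro k n m hk hn hm y hy
    obtain ⟨h1, h1v⟩ := Rmap0_prune (psum n k) m hm y hy
    obtain ⟨h2, _⟩ := Rmap0_prune k n hn (Rmap0 (psum n k) m y) h1v
    have hbs := blockSum_pos hn hm
    have hyb : y.vert = psum (blockSum n m) k := by rw [psum_blockSum]; exact hy
    obtain ⟨h3, _⟩ := Rmap0_prune k (blockSum n m) hbs y hyb
    refine prune_eq_of y _ _ (comp_prune h1 h2) h3 ?_
    intro j hj
    have hjM : j ≤ psum m (psum n k) := by omega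
    apply bool_eq_iff
    simp only [Bool.and_eq_true, decide_eq_true_eq]
    rw [not_mem_R0list hjM, not_mem_R0list (show j ≤ psum (blockSum n m) k by
      rw [psum_blockSum]; exact hjM)]
    constructor
    · rintro ⟨⟨t, htN, rfl⟩, hout⟩
      rw [cnt_keep_R0 hm htN, not_mem_R0list htN] at hout
      obtain ⟨s, hsk, hst⟩ := hout
      exact ⟨s, hsk, by rw [psum_blockSum, hst]⟩
    · rintro ⟨s, hsk, hs⟩
      rw [psum_blockSum] at hs
      have htN : psum n s ≤ psum n k := psum_le n hsk
      refine ⟨⟨psum n s, htN, hs⟩, ?_⟩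
      rw [← hs, cnt_keep_R0 hm htN, not_mem_R0list htN]
      exact ⟨s, hsk, rfl⟩
  · -- (iii)
    intro k n m i hk hi1 hik hn hm y hy
    obtain ⟨h1, h1v⟩ := Rmap0_prune (psum n k) m hm y hy
    obtain ⟨h2, _⟩ := Rmapi_prune k n i hi1 hik (Rmap0 (psum n k) m y) h1v
    have hbs := blockSum_pos hn hm
    have hyb : y.vert = psum (blockSum n m) k := by rw [psum_blockSum]; exact hy
    obtain ⟨h3, h3v⟩ := Rmapi_prune k (blockSum n m) i hi1 hik y hyb
    have hpred : psum n i = psum n (i - 1) + n i := psum_pred_add hi1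
    have hiN : psum n i ≤ psum n k := psum_le n hik
    have hm' : ∀ l, 1 ≤ l → l ≤ n i → 1 ≤ m (psum n (i - 1) + l) := fun l hl1 hl2 =>
      hm _ (by omega) (by omega)
    have h3v' : (Rmapi k (blockSum n m) i y).vert
        = psum (fun l => m (psum n (i - 1) + l)) (n i) := by
      rw [h3v, blockSum_eq_psum]
    obtain ⟨h4, _⟩ := Rmap0_prune (n i) (fun l => m (psum n (i - 1) + l)) hm' _ h3v'
    refine prune_eq_of y _ _ (comp_prune h1 h2) (comp_prune h3 h4) ?_
    intro j hj
    have hjM : j ≤ psum m (psum n k) := by omega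
    have hjbs : j ≤ psum (blockSum n m) k := by rw [psum_blockSum]; exact hjM
    have hAi : psum (blockSum n m) (i - 1) = psum m (psum n (i - 1)) := psum_blockSum n m (i - 1)
    have hBi : psum (blockSum n m) i = psum m (psum n i) := psum_blockSum n m i
    have eTot : psum m (psum n i)
        = psum m (psum n (i - 1)) + psum (fun l => m (psum n (i - 1) + l)) (n i) := by
      have h := psum_shift m (psum n (i - 1)) (n i)
      rw [show psum n (i - 1) + n i = psum n i from hpred.symm] at h
      exact h
    apply bool_eq_iff
    simp only [Bool.and_eq_true, decide_eq_true_eq]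
    rw [not_mem_R0list hjM, not_mem_Rilist hjbs, hAi, hBi]
    constructor
    · rintro ⟨⟨t, htN, rfl⟩, hint⟩
      rw [cnt_keep_R0 hm htN, not_mem_Rilist htN] at hint
      obtain ⟨hc1, hc2⟩ := hint
      have hA : psum m (psum n (i - 1)) ≤ psum m t := psum_le m hc1
      have hB : psum m t ≤ psum m (psum n i) := psum_le m hc2
      refine ⟨⟨hA, hB⟩, ?_⟩
      rw [cnt_keep_Ri hjbs (by rw [hAi]; exact hA) (by rw [hBi]; exact hB), hAi]
      have eT : psum m (psum n (i - 1) + (t - psum n (i - 1)))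
          = psum m (psum n (i - 1))
            + psum (fun l => m (psum n (i - 1) + l)) (t - psum n (i - 1)) :=
        psum_shift m _ _
      rw [show psum n (i - 1) + (t - psum n (i - 1)) = t from by omega] at eT
      rw [not_mem_R0list (show psum m t - psum m (psum n (i - 1))
          ≤ psum (fun l => m (psum n (i - 1) + l)) (n i) from by omega)]
      exact ⟨t - psum n (i - 1), by omega, by omega⟩
    · rintro ⟨⟨hA, hB⟩, hq2⟩
      rw [cnt_keep_Ri hjbs (by rw [hAi]; exact hA) (by rw [hBi]; exact hB), hAi] at hq2
      rw [not_mem_R0list (by omega)] at hq2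
      obtain ⟨s, hsn, hs⟩ := hq2
      have eT : psum m (psum n (i - 1) + s)
          = psum m (psum n (i - 1)) + psum (fun l => m (psum n (i - 1) + l)) s :=
        psum_shift m _ _
      have htN : psum n (i - 1) + s ≤ psum n k := by omega
      refine ⟨⟨psum n (i - 1) + s, htN, by omega⟩, ?_⟩
      rw [show j = psum m (psum n (i - 1) + s) from by omega]
      rw [cnt_keep_R0 hm htN, not_mem_Rilist htN]
      exact ⟨by omega, by omega⟩
  · -- (iv)
    intro k n m i j hk hi1 hik hj1 hjn hn hm y hy
    have hpred : psum n i = psum n (i - 1) + n i := psum_pred_add hi1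
    have hiN : psum n i ≤ psum n k := psum_le n hik
    have hcj1 : 1 ≤ psum n (i - 1) + j := by omega
    have hcjN : psum n (i - 1) + j ≤ psum n k := by omega
    obtain ⟨hL, _⟩ := Rmapi_prune (psum n k) m (psum n (i - 1) + j) hcj1 hcjN y hy
    have hbs := blockSum_pos hn hm
    have hyb : y.vert = psum (blockSum n m) k := by rw [psum_blockSum]; exact hy
    obtain ⟨h3, h3v⟩ := Rmapi_prune k (blockSum n m) i hi1 hik y hyb
    have h3v' : (Rmapi k (blockSum n m) i y).vert
        = psum (fun l => m (psum n (i - 1) + l)) (n i) := by rw [h3v, blockSum_eq_psum]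
    obtain ⟨h4, _⟩ := Rmapi_prune (n i) (fun l => m (psum n (i - 1) + l)) j hj1 hjn _ h3v'
    refine prune_eq_of y _ _ hL (comp_prune h3 h4) ?_
    intro j' hj'
    have hjM : j' ≤ psum m (psum n k) := by omega
    have hjbs : j' ≤ psum (blockSum n m) k := by rw [psum_blockSum]; exact hjM
    have hAi : psum (blockSum n m) (i - 1) = psum m (psum n (i - 1)) := psum_blockSum n m (i - 1)
    have hBi : psum (blockSum n m) i = psum m (psum n i) := psum_blockSum n m i
    have eJ : psum m (psum n (i - 1) + j)
        = psum m (psum n (i - 1)) + psum (fun l => m (psum n (i - 1) + l)) j :=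
      psum_shift m _ _
    have eJ1 : psum m (psum n (i - 1) + (j - 1))
        = psum m (psum n (i - 1)) + psum (fun l => m (psum n (i - 1) + l)) (j - 1) :=
      psum_shift m _ _
    have eTot : psum m (psum n i)
        = psum m (psum n (i - 1)) + psum (fun l => m (psum n (i - 1) + l)) (n i) := by
      have h := psum_shift m (psum n (i - 1)) (n i)
      rw [show psum n (i - 1) + n i = psum n i from hpred.symm] at h
      exact h
    have hidx : psum n (i - 1) + j - 1 = psum n (i - 1) + (j - 1) := by omega
    have hm1 : psum m (psum n (i - 1)) ≤ psum m (psum n (i - 1) + (j - 1)) :=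
      psum_le m (by omega)
    have hm2 : psum m (psum n (i - 1) + (j - 1)) ≤ psum m (psum n (i - 1) + j) :=
      psum_le m (by omega)
    have hm3 : psum m (psum n (i - 1) + j) ≤ psum m (psum n i) := psum_le m (by omega)
    have hm'le : psum (fun l => m (psum n (i - 1) + l)) (j - 1)
        ≤ psum (fun l => m (psum n (i - 1) + l)) j := psum_le _ (by omega)
    apply bool_eq_iff
    simp only [Bool.and_eq_true, decide_eq_true_eq]
    rw [not_mem_Rilist hjM, not_mem_Rilist hjbs, hAi, hBi, hidx]
    constructor
    · rintro ⟨ha, hb⟩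
      have hAj : psum m (psum n (i - 1)) ≤ j' := by omega
      have hBj : j' ≤ psum m (psum n i) := by omega
      refine ⟨⟨hAj, hBj⟩, ?_⟩
      rw [cnt_keep_Ri hjbs (by rw [hAi]; exact hAj) (by rw [hBi]; exact hBj), hAi]
      rw [not_mem_Rilist (show j' - psum m (psum n (i - 1))
          ≤ psum (fun l => m (psum n (i - 1) + l)) (n i) from by omega)]
      exact ⟨by omega, by omega⟩
    · rintro ⟨⟨hAj, hBj⟩, hq⟩
      rw [cnt_keep_Ri hjbs (by rw [hAi]; exact hAj) (by rw [hBi]; exact hBj), hAi] at hq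
      rw [not_mem_Rilist (by omega)] at hq
      exact ⟨by omega, by omega⟩



/-- The face maps `d_i : Y_n → Y_{n-1}` on planar binary trees satisfy
the pre-operadic identities:
(i) `R_0(k; 1,…,1) = id` on `Y_k`;
(ii) `R_0(k; n⃗) ∘ R_0(n_1+⋯+n_k; m⃗) = R_0(k; blocksums of m⃗)`;
(iii) `R_i(k; n⃗) ∘ R_0(n_1+⋯+n_k; m⃗) = R_0(n_i; shifted m⃗) ∘ R_i(k; blocksums of m⃗)`;
(iv) `R_{n_1+⋯+n_{i-1}+j}(n_1+⋯+n_k; m⃗) = R_j(n_i; shifted m⃗) ∘ R_i(k; blocksums of m⃗)`. -/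
theorem preoperadic_identities (D : Type*) :
    (∀ k : ℕ, 1 ≤ k → ∀ y : PBTree, y.vert = k → Rmap0 k (fun _ => 1) y = y) ∧
    (∀ (k : ℕ) (n m : ℕ → ℕ), 1 ≤ k →
      (∀ i, 1 ≤ i → i ≤ k → 1 ≤ n i) →
      (∀ j, 1 ≤ j → j ≤ psum n k → 1 ≤ m j) →
      ∀ y : PBTree, y.vert = psum m (psum n k) →
        Rmap0 k n (Rmap0 (psum n k) m y) = Rmap0 k (blockSum n m) y) ∧
    (∀ (k : ℕ) (n m : ℕ → ℕ) (i : ℕ), 1 ≤ k → 1 ≤ i → i ≤ k →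
      (∀ i', 1 ≤ i' → i' ≤ k → 1 ≤ n i') →
      (∀ j, 1 ≤ j → j ≤ psum n k → 1 ≤ m j) →
      ∀ y : PBTree, y.vert = psum m (psum n k) →
        Rmapi k n i (Rmap0 (psum n k) m y)
          = Rmap0 (n i) (fun j => m (psum n (i - 1) + j)) (Rmapi k (blockSum n m) i y)) ∧
    (∀ (k : ℕ) (n m : ℕ → ℕ) (i j : ℕ), 1 ≤ k → 1 ≤ i → i ≤ k → 1 ≤ j → j ≤ n i →
      (∀ i', 1 ≤ i' → i' ≤ k → 1 ≤ n i') →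
      (∀ j', 1 ≤ j' → j' ≤ psum n k → 1 ≤ m j') →
      ∀ y : PBTree, y.vert = psum m (psum n k) →
        Rmapi (psum n k) m (psum n (i - 1) + j) y
          = Rmapi (n i) (fun l => m (psum n (i - 1) + l)) j
              (Rmapi k (blockSum n m) i y)) :=
  preoperadic_identities'
end

section
/- Let (D, ⊣, ⊢, α) be a hom-dialgebra over a field K, and let π ∈ CY^2_α(D,D) be defined by π([21]; a, b) = a ⊣ b and π([12]; a, b) = a ⊢ b. Then π is a multiplication on the operad CY^•_α(D,D): the twisted circle product satisfies (π ∘_1 π − π ∘_2 π)(y; a, b, c) = 0 for every 3-tree y ∈ Y_3 and all a, b, c ∈ D; explicitly, this expression equals (a ⊢ b) ⊢ α(c) − α(a) ⊢ (b ⊢ c) for y = [123], (a ⊣ b) ⊢ α(c) − α(a) ⊢ (b ⊢ c) for y = [213], (a ⊢ b) ⊣ α(c) − α(a) ⊢ (b ⊣ c) for y = [131], (a ⊣ b) ⊣ α(c) − α(a) ⊣ (b ⊢ c) for y = [312], and (a ⊣ b) ⊣ α(c) − α(a) ⊣ (b ⊣ c) for y = [321], and each of these vanishes by the hom-dialgebra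 axioms. -/
/-- `nfun n i` is the `m`-tuple `(1,…,1,n,1,…,1)` with `n` in the `i`-th place. -/
def nfun (n i : ℕ) : ℕ → ℕ := fun j => if j = i then n else 1

def ypcomp {D : Type*} (α : D → D) (m n i : ℕ) (f g : PBTree → (ℕ → D) → D) :
    PBTree → (ℕ → D) → D :=
  fun y a =>
    f (Rmap0 m (nfun n i) y) fun j =>
      if j + 1 < i then α^[n - 1] (a j)
      else if j + 1 = i then g (Rmapi m (nfun n i) i y) fun k => a (i - 1 + k)
      else α^[n - 1] (a (j + n - 1))

def t12 : PBTree := .node (.node .leaf .leaf) .leaf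
def t21 : PBTree := .node .leaf (.node .leaf .leaf)
def t123 : PBTree := .node (.node (.node .leaf .leaf) .leaf) .leaf
def t213 : PBTree := .node (.node .leaf (.node .leaf .leaf)) .leaf
def t131 : PBTree := .node (.node .leaf .leaf) (.node .leaf .leaf)
def t312 : PBTree := .node .leaf (.node (.node .leaf .leaf) .leaf)
def t321 : PBTree := .node .leaf (.node .leaf (.node .leaf .leaf))

def piC {D : Type*} [Zero D] (dl dr : D → D → D) : PBTree → (ℕ → D) → D :=
  fun y a => if y = t21 then dl (a 0) (a 1) else if y = t12 then dr (a 0) (a 1) else 0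

def piBr {D : Type*} [AddCommGroup D] (dl dr : D → D → D) (α : D → D)
    (y : PBTree) (a : ℕ → D) : D :=
  ypcomp α 2 2 1 (piC dl dr) (piC dl dr) y a - ypcomp α 2 2 2 (piC dl dr) (piC dl dr) y a

def tup3 {D : Type*} (a b c : D) : ℕ → D :=
  fun k => if k = 0 then a else if k = 1 then b else c

section Aux
set_option maxHeartbeats 1000000

lemma R0a_123 : Rmap0 2 (nfun 2 1) t123 = t12 := by decide
lemma Ria_123 : Rmapi 2 (nfun 2 1) 1 t123 = t12 := by decide
lemma R0b_123 : Rmap0 2 (nfun 2 2) t123 = t12 := by decide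
lemma Rib_123 : Rmapi 2 (nfun 2 2) 2 t123 = t12 := by decide
lemma R0a_213 : Rmap0 2 (nfun 2 1) t213 = t12 := by decide
lemma Ria_213 : Rmapi 2 (nfun 2 1) 1 t213 = t21 := by decide
lemma R0b_213 : Rmap0 2 (nfun 2 2) t213 = t12 := by decide
lemma Rib_213 : Rmapi 2 (nfun 2 2) 2 t213 = t12 := by decide
lemma R0a_131 : Rmap0 2 (nfun 2 1) t131 = t21 := by decide
lemma Ria_131 : Rmapi 2 (nfun 2 1) 1 t131 = t12 := by decide
lemma R0b_131 : Rmap0 2 (nfun 2 2) t131 = t12 := by decide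
lemma Rib_131 : Rmapi 2 (nfun 2 2) 2 t131 = t21 := by decide
lemma R0a_312 : Rmap0 2 (nfun 2 1) t312 = t21 := by decide
lemma Ria_312 : Rmapi 2 (nfun 2 1) 1 t312 = t21 := by decide
lemma R0b_312 : Rmap0 2 (nfun 2 2) t312 = t21 := by decide
lemma Rib_312 : Rmapi 2 (nfun 2 2) 2 t312 = t12 := by decide
lemma R0a_321 : Rmap0 2 (nfun 2 1) t321 = t21 := by decide
lemma Ria_321 : Rmapi 2 (nfun 2 1) 1 t321 = t21 := by decide
lemma R0b_321 : Rmap0 2 (nfun 2 2) t321 = t21 := by decide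
lemma Rib_321 : Rmapi 2 (nfun 2 2) 2 t321 = t21 := by decide


lemma vert_zero : ∀ y : PBTree, y.vert = 0 → y = .leaf := by
  rintro (_ | ⟨l, r⟩) h
  · rfl
  · simp [PBTree.vert] at h

lemma vert_one : ∀ y : PBTree, y.vert = 1 → y = .node .leaf .leaf := by
  rintro (_ | ⟨l, r⟩) h
  · simp [PBTree.vert] at h
  · simp only [PBTree.vert] at h
    rw [vert_zero l (by omega), vert_zero r (by omega)]

lemma vert_two : ∀ y : PBTree, y.vert = 2 → y = t12 ∨ y = t21 := by
  rintro (_ | ⟨l, r⟩) h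
  · simp [PBTree.vert] at h
  · simp only [PBTree.vert] at h
    have : l.vert = 0 ∨ l.vert = 1 := by omega
    rcases this with h0 | h0
    · right
      rw [vert_zero l h0, vert_one r (by omega)]; rfl
    · left
      rw [vert_one l h0, vert_zero r (by omega)]; rfl

lemma vert_three (y : PBTree) (hy : y.vert = 3) :
    y = t123 ∨ y = t213 ∨ y = t131 ∨ y = t312 ∨ y = t321 := by
  obtain _ | ⟨l, r⟩ := y
  · simp [PBTree.vert] at hy
  · simp only [PBTree.vert] at hy
    have hl2 : l.vert = 0 ∨ l.vert = 1 ∨ l.vert = 2 := by omega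
    rcases hl2 with h | h | h
    · have hr : r.vert = 2 := by omega
      have hl := vert_zero l h
      rcases vert_two r hr with h2 | h2 <;> subst hl h2 <;>
        simp [t312, t321, t12, t21]
    · have hr : r.vert = 1 := by omega
      obtain _ | ⟨a, b⟩ := l
      · simp [PBTree.vert] at h
      · simp only [PBTree.vert] at h
        have ha := vert_zero a (by omega)
        have hb := vert_zero b (by omega)
        obtain _ | ⟨c, d⟩ := r
        · simp [PBTree.vert] at hr
        · simp only [PBTree.vert] at hr
          have hc := vert_zero c (by omega)
          have hd := vert_zero d (by omega)
          subst ha hb hc hd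
          simp [t131]
    · have hr : r.vert = 0 := by omega
      have hrl := vert_zero r hr
      rcases vert_two l h with h2 | h2 <;> subst hrl h2 <;>
        simp [t123, t213, t12, t21]

end Aux

/-- Let `(D, ⊣, ⊢, α)` be a hom-dialgebra and `π ∈ CY^2_α(D,D)` be
given by `π([21]; a, b) = a ⊣ b` and `π([12]; a, b) = a ⊢ b`.  Then `π` is a
multiplication on the operad `CY^•_α(D,D)`: `(π ∘₁ π - π ∘₂ π)(y; a, b, c) = 0` for
every `y ∈ Y_3`; explicitly this expression equals
`(a ⊢ b) ⊢ α(c) - α(a) ⊢ (b ⊢ c)` for `y = [123]`,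
`(a ⊣ b) ⊢ α(c) - α(a) ⊢ (b ⊢ c)` for `y = [213]`,
`(a ⊢ b) ⊣ α(c) - α(a) ⊢ (b ⊣ c)` for `y = [131]`,
`(a ⊣ b) ⊣ α(c) - α(a) ⊣ (b ⊢ c)` for `y = [312]`,
`(a ⊣ b) ⊣ α(c) - α(a) ⊣ (b ⊣ c)` for `y = [321]`,
each of which vanishes by the hom-dialgebra axioms. -/

theorem pi_is_multiplication {K D : Type*} [Field K] [AddCommGroup D] [Module K D]
    (dl dr : D →ₗ[K] D →ₗ[K] D) (α : D →ₗ[K] D)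
    (hαl : ∀ a b : D, α (dl a b) = dl (α a) (α b))
    (hαr : ∀ a b : D, α (dr a b) = dr (α a) (α b))
    (ax1 : ∀ a b c : D, dl (α a) (dl b c) = dl (dl a b) (α c))
    (ax2 : ∀ a b c : D, dl (dl a b) (α c) = dl (α a) (dr b c))
    (ax3 : ∀ a b c : D, dl (dr a b) (α c) = dr (α a) (dl b c))
    (ax4 : ∀ a b c : D, dr (dl a b) (α c) = dr (α a) (dr b c))
    (ax5 : ∀ a b c : D, dr (α a) (dr b c) = dr (dr a b) (α c)) :
    ∀ a b c : D,
      piBr (fun x z => dl x z) (fun x z => dr x z) (⇑α) t123 (tup3 a b c)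
          = dr (dr a b) (α c) - dr (α a) (dr b c) ∧
      piBr (fun x z => dl x z) (fun x z => dr x z) (⇑α) t213 (tup3 a b c)
          = dr (dl a b) (α c) - dr (α a) (dr b c) ∧
      piBr (fun x z => dl x z) (fun x z => dr x z) (⇑α) t131 (tup3 a b c)
          = dl (dr a b) (α c) - dr (α a) (dl b c) ∧
      piBr (fun x z => dl x z) (fun x z => dr x z) (⇑α) t312 (tup3 a b c)
          = dl (dl a b) (α c) - dl (α a) (dr b c) ∧
      piBr (fun x z => dl x z) (fun x z => dr x z) (⇑α) t321 (tup3 a b c)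
          = dl (dl a b) (α c) - dl (α a) (dl b c) ∧
      (∀ y : PBTree, y.vert = 3 →
        piBr (fun x z => dl x z) (fun x z => dr x z) (⇑α) y (tup3 a b c) = 0) := by
  intro a b c
  have h123 : piBr (fun x z => dl x z) (fun x z => dr x z) (⇑α) t123 (tup3 a b c)
      = dr (dr a b) (α c) - dr (α a) (dr b c) := by
    simp (config := { decide := true })
      [piBr, ypcomp, piC, tup3, R0a_123, Ria_123, R0b_123, Rib_123]
  have h213 : piBr (fun x z => dl x z) (fun x z => dr x z) (⇑α) t213 (tup3 a b c)
      = dr (dl a b) (α c) - dr (α a) (dr b c) := by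
    simp (config := { decide := true })
      [piBr, ypcomp, piC, tup3, R0a_213, Ria_213, R0b_213, Rib_213]
  have h131 : piBr (fun x z => dl x z) (fun x z => dr x z) (⇑α) t131 (tup3 a b c)
      = dl (dr a b) (α c) - dr (α a) (dl b c) := by
    simp (config := { decide := true })
      [piBr, ypcomp, piC, tup3, R0a_131, Ria_131, R0b_131, Rib_131]
  have h312 : piBr (fun x z => dl x z) (fun x z => dr x z) (⇑α) t312 (tup3 a b c)
      = dl (dl a b) (α c) - dl (α a) (dr b c) := by
    simp (config := { decide := true })
      [piBr, ypcomp, piC, tup3, R0a_312, Ria_312, R0b_312, Rib_312]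
  have h321 : piBr (fun x z => dl x z) (fun x z => dr x z) (⇑α) t321 (tup3 a b c)
      = dl (dl a b) (α c) - dl (α a) (dl b c) := by
    simp (config := { decide := true })
      [piBr, ypcomp, piC, tup3, R0a_321, Ria_321, R0b_321, Rib_321]
  refine ⟨h123, h213, h131, h312, h321, ?_⟩
  intro y hy
  rcases vert_three y hy with h | h | h | h | h <;> subst h
  · rw [h123, ax5, sub_self]
  · rw [h213, ax4, sub_self]
  · rw [h131, ax3, sub_self]
  · rw [h312, ax2, sub_self]
  · rw [h321, ← ax1, sub_self]
end
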